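/- Let C_a, C_t, N_a, s be positive reals and J ≥ 2 a natural number. Suppose C_a > C_t and 0 < x < (C_t/C_a)^{1/(2(J−1))}, and set l̃ = (J+1)/2 + log(C_a/C_t)/(4·log x). Then 1 < l̃ < (J+1)/2, and for every integer l with 1 ≤ l ≤ J one has γ_x(l) ≤ max(γ_x(⌊l̃⌋), γ_x(⌈l̃⌉)) (Proposition 1, Case III, first subcase). -/

import Mathlib

open Real

noncomputable def snr (Ca Ct Na s : ℝ) (J : ℕ) (x l : ℝ) : ℝ :=
  Ca * Ct * Na * x ^ (2 * ((J : ℝ) - 1)) /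
    (s * Ca * x ^ (2 * ((J : ℝ) - l)) + s * Ct * x ^ (2 * (l - 1)) + s ^ 2)

private lemma denom_mono (Ca Ct s L : ℝ) (hCa : 0 < Ca) (hCt : 0 < Ct) (hs : 0 < s)
    (Jr a b : ℝ) (hab : a ≤ b) (hL : L < 0)
    (hcond : 2*L*(Jr + 1 - a - b) ≤ Real.log (Ct/Ca)) :
    s*Ca*Real.exp (2*L*(Jr-b)) + s*Ct*Real.exp (2*L*(b-1))
      ≤ s*Ca*Real.exp (2*L*(Jr-a)) + s*Ct*Real.exp (2*L*(a-1)) := by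
  have hEab : Real.exp (2*L*b) ≤ Real.exp (2*L*a) := by
    apply Real.exp_le_exp.mpr; nlinarith
  have hX : Real.exp (2*L*(Jr+1-a-b)) ≤ Ct/Ca := by
    rw [← Real.exp_log (div_pos hCt hCa)]; exact Real.exp_le_exp.mpr hcond
  have hX' : Ca * Real.exp (2*L*(Jr+1-a-b)) ≤ Ct := by
    rw [mul_comm]; exact (le_div_iff₀ hCa).mp hX
  have e1 : Real.exp (2*L*(Jr-a))
      = Real.exp (2*L*(Jr+1-a-b)) * Real.exp (2*L*(-1)) * Real.exp (2*L*b) := by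
    rw [← Real.exp_add, ← Real.exp_add]; ring_nf
  have e2 : Real.exp (2*L*(Jr-b))
      = Real.exp (2*L*(Jr+1-a-b)) * Real.exp (2*L*(-1)) * Real.exp (2*L*a) := by
    rw [← Real.exp_add, ← Real.exp_add]; ring_nf
  have e3 : Real.exp (2*L*(a-1)) = Real.exp (2*L*(-1)) * Real.exp (2*L*a) := by
    rw [← Real.exp_add]; ring_nf
  have e4 : Real.exp (2*L*(b-1)) = Real.exp (2*L*(-1)) * Real.exp (2*L*b) := by
    rw [← Real.exp_add]; ring_nf
  rw [e1, e2, e3, e4]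
  nlinarith [mul_nonneg (mul_nonneg (mul_nonneg hs.le (Real.exp_pos (2*L*(-1))).le)
      (sub_nonneg.mpr hEab)) (sub_nonneg.mpr hX')]

private lemma denom_mono' (Ca Ct s L : ℝ) (hCa : 0 < Ca) (hCt : 0 < Ct) (hs : 0 < s)
    (Jr a b : ℝ) (hab : a ≤ b) (hL : L < 0)
    (hcond : Real.log (Ct/Ca) ≤ 2*L*(Jr + 1 - a - b)) :
    s*Ca*Real.exp (2*L*(Jr-a)) + s*Ct*Real.exp (2*L*(a-1))
      ≤ s*Ca*Real.exp (2*L*(Jr-b)) + s*Ct*Real.exp (2*L*(b-1)) := by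
  have hEab : Real.exp (2*L*b) ≤ Real.exp (2*L*a) := by
    apply Real.exp_le_exp.mpr; nlinarith
  have hX : Ct/Ca ≤ Real.exp (2*L*(Jr+1-a-b)) := by
    rw [← Real.exp_log (div_pos hCt hCa)]; exact Real.exp_le_exp.mpr hcond
  have hX' : Ct ≤ Ca * Real.exp (2*L*(Jr+1-a-b)) := by
    rw [mul_comm]; exact (div_le_iff₀ hCa).mp hX
  have e1 : Real.exp (2*L*(Jr-a))
      = Real.exp (2*L*(Jr+1-a-b)) * Real.exp (2*L*(-1)) * Real.exp (2*L*b) := by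
    rw [← Real.exp_add, ← Real.exp_add]; ring_nf
  have e2 : Real.exp (2*L*(Jr-b))
      = Real.exp (2*L*(Jr+1-a-b)) * Real.exp (2*L*(-1)) * Real.exp (2*L*a) := by
    rw [← Real.exp_add, ← Real.exp_add]; ring_nf
  have e3 : Real.exp (2*L*(a-1)) = Real.exp (2*L*(-1)) * Real.exp (2*L*a) := by
    rw [← Real.exp_add]; ring_nf
  have e4 : Real.exp (2*L*(b-1)) = Real.exp (2*L*(-1)) * Real.exp (2*L*b) := by
    rw [← Real.exp_add]; ring_nf
  rw [e1, e2, e3, e4]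
  nlinarith [mul_nonneg (mul_nonneg (mul_nonneg hs.le (Real.exp_pos (2*L*(-1))).le)
      (sub_nonneg.mpr hEab)) (sub_nonneg.mpr hX')]

/-- Proposition 1, Case III, first subcase: if `C_a > C_t` and
`0 < x < (C_t/C_a)^{1/(2(J−1))}`, then `l̃ = (J+1)/2 + log(C_a/C_t)/(4·log x)` satisfies
`1 < l̃ < (J+1)/2`, and the received SNR at any integer AIRS location `1 ≤ l ≤ J` is at most
the larger of the SNRs at `⌊l̃⌋` and `⌈l̃⌉`. -/
theorem stmt_7 (Ca Ct Na s : ℝ) (hCa : 0 < Ca) (hCt : 0 < Ct) (hNa : 0 < Na) (hs : 0 < s)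
    (J : ℕ) (hJ : 2 ≤ J) (x : ℝ)
    (hCaCt : Ct < Ca)
    (hx0 : 0 < x) (hxub : x < (Ct / Ca) ^ (1 / (2 * ((J : ℝ) - 1)))) :
    (1 < ((J : ℝ) + 1) / 2 + Real.log (Ca / Ct) / (4 * Real.log x)) ∧
    (((J : ℝ) + 1) / 2 + Real.log (Ca / Ct) / (4 * Real.log x) < ((J : ℝ) + 1) / 2) ∧
    ∀ l : ℤ, 1 ≤ l → l ≤ (J : ℤ) →
      snr Ca Ct Na s J x (l : ℝ) ≤
        max (snr Ca Ct Na s J x ((⌊((J : ℝ) + 1) / 2 + Real.log (Ca / Ct) / (4 * Real.log x)⌋ : ℤ) : ℝ))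
            (snr Ca Ct Na s J x ((⌈((J : ℝ) + 1) / 2 + Real.log (Ca / Ct) / (4 * Real.log x)⌉ : ℤ) : ℝ)) := by
  have hJR : (2:ℝ) ≤ (J:ℝ) := by exact_mod_cast hJ
  set L := Real.log x with hLdef
  set r := Real.log (Ca / Ct) with hrdef
  have hr : 0 < r := Real.log_pos ((one_lt_div hCt).mpr hCaCt)
  have hexp_pos : (0:ℝ) < 1 / (2 * ((J:ℝ) - 1)) := by
    apply div_pos one_pos; linarith
  have hx1 : x < 1 := by
    refine lt_trans hxub (Real.rpow_lt_one (div_pos hCt hCa).le ?_ hexp_pos)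
    exact (div_lt_one hCa).mpr hCaCt
  have hL0 : L < 0 := Real.log_neg hx0 hx1
  have hLne : L ≠ 0 := ne_of_lt hL0
  have hlogCtCa : Real.log (Ct/Ca) = -r := by
    rw [hrdef, ← Real.log_inv, inv_div]
  have hLlt : L < (1 / (2 * ((J:ℝ) - 1))) * (-r) := by
    have h1 := Real.log_lt_log hx0 hxub
    rwa [Real.log_rpow (div_pos hCt hCa), hlogCtCa] at h1
  have hkey : 2*((J:ℝ)-1)*L < -r := by
    have h2 : (0:ℝ) < 2*((J:ℝ)-1) := by linarith
    have h3 := mul_lt_mul_of_pos_left hLlt h2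
    have h4 : 2*((J:ℝ)-1) * ((1/(2*((J:ℝ)-1))) * (-r)) = -r := by
      rw [← mul_assoc, mul_one_div_cancel h2.ne', one_mul]
    linarith
  have h4L : 4*L < 0 := by linarith
  set lt := ((J : ℝ) + 1) / 2 + r / (4 * L) with hltdef
  clear_value lt
  have part1 : 1 < lt := by
    have h5 : ((1:ℝ)-(J:ℝ))/2 < r/(4*L) := by
      rw [lt_div_iff_of_neg h4L]; nlinarith
    rw [hltdef]; linarith
  have part2 : lt < ((J : ℝ) + 1) / 2 := by
    have := div_neg_of_pos_of_neg hr h4L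
    rw [hltdef]; linarith
  refine ⟨part1, part2, ?_⟩
  have hr_eq : r = (lt - ((J:ℝ)+1)/2) * (4*L) := by
    rw [hltdef]
    field_simp
    ring
  have hsnr : ∀ t : ℝ, snr Ca Ct Na s J x t
      = Ca*Ct*Na*Real.exp (2*L*((J:ℝ)-1)) /
        (s*Ca*Real.exp (2*L*((J:ℝ)-t)) + s*Ct*Real.exp (2*L*(t-1)) + s^2) := by
    intro t
    unfold snr
    rw [Real.rpow_def_of_pos hx0, Real.rpow_def_of_pos hx0, Real.rpow_def_of_pos hx0]
    rw [← hLdef]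
    ring_nf
  have hnum : 0 ≤ Ca*Ct*Na*Real.exp (2*L*((J:ℝ)-1)) := by positivity
  intro l _ _
  by_cases hcase : l ≤ ⌊lt⌋
  · set m : ℤ := ⌊lt⌋ with hm
    have hlm : (l:ℝ) ≤ (m:ℝ) := by exact_mod_cast hcase
    have hmlt : (m:ℝ) ≤ lt := Int.floor_le lt
    have hcond : 2*L*((J:ℝ) + 1 - (l:ℝ) - (m:ℝ)) ≤ Real.log (Ct/Ca) := by
      rw [hlogCtCa, hr_eq]
      nlinarith [mul_nonneg (by linarith : (0:ℝ) ≤ 2*lt - (l:ℝ) - (m:ℝ)) (by linarith : (0:ℝ) ≤ -L)]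
    have hd := denom_mono Ca Ct s L hCa hCt hs (J:ℝ) (l:ℝ) (m:ℝ) hlm hL0 hcond
    refine le_trans ?_ (le_max_left _ _)
    rw [hsnr, hsnr]
    apply div_le_div_of_nonneg_left hnum ?_ (by linarith)
    have := Real.exp_pos (2*L*((J:ℝ)-(m:ℝ)))
    have := Real.exp_pos (2*L*((m:ℝ)-1))
    positivity
  · have hcl : ⌈lt⌉ ≤ l := by
      have := Int.ceil_le_floor_add_one lt
      omega
    set m : ℤ := ⌈lt⌉ with hm
    have hlm : (m:ℝ) ≤ (l:ℝ) := by exact_mod_cast hcl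
    have hmlt : lt ≤ (m:ℝ) := Int.le_ceil lt
    have hcond : Real.log (Ct/Ca) ≤ 2*L*((J:ℝ) + 1 - (m:ℝ) - (l:ℝ)) := by
      rw [hlogCtCa, hr_eq]
      nlinarith [mul_nonneg (by linarith : (0:ℝ) ≤ (m:ℝ) + (l:ℝ) - 2*lt) (by linarith : (0:ℝ) ≤ -L)]
    have hd := denom_mono' Ca Ct s L hCa hCt hs (J:ℝ) (m:ℝ) (l:ℝ) hlm hL0 hcond
    refine le_trans ?_ (le_max_right _ _)
    rw [hsnr, hsnr]
    apply div_le_div_of_nonneg_left hnum ?_ (by linarith)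
    have := Real.exp_pos (2*L*((J:ℝ)-(m:ℝ)))
    have := Real.exp_pos (2*L*((m:ℝ)-1))
    positivity
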